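/- arXiv:1711.08442 — 2 statements merged into one kernel-verified Lean document; each statement's English description precedes it below -/
import Mathlib

section
/- Let Φ' be the state-collapsed Markov chain of Definition (collapsing a stopping set S into a single state s) obtained from an irreducible time-reversible chain Φ on a finite state space. Then Φ' is irreducible, and its stationary distribution assigns to each non-collapsed state x the same probability π(x) as in the original chain Φ, and assigns probability Z_S/Z to the collapsed state s. -/
lemma aux_pow_nonneg {α : Type*} [Fintype α] [DecidableEq α]
    (M : Matrix α α ℝ) (hM : ∀ i j, 0 ≤ M i j) :
    ∀ n i j, 0 ≤ (M ^ n) i j := by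
  intro n
  induction n with
  | zero => intro i j; rw [pow_zero, Matrix.one_apply]; positivity
  | succ n ih =>
      intro i j
      rw [pow_succ, Matrix.mul_apply]
      exact Finset.sum_nonneg fun c _ => mul_nonneg (ih i c) (hM c j)

lemma aux_pow_pos {α β : Type*} [Fintype α] [Fintype β] [DecidableEq α] [DecidableEq β]
    (M : Matrix α α ℝ) (N : Matrix β β ℝ) (hM : ∀ i j, 0 ≤ M i j) (hN : ∀ i j, 0 ≤ N i j)
    (φ : α → β) (hedge : ∀ i j, 0 < M i j → 0 < N (φ i) (φ j)) :
    ∀ n i j, 0 < (M ^ n) i j → 0 < (N ^ n) (φ i) (φ j) := by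
  intro n
  induction n with
  | zero =>
      intro i j h
      rw [pow_zero, Matrix.one_apply] at h
      split_ifs at h with he
      · subst he; simp [pow_zero, Matrix.one_apply]
      · exact absurd h (lt_irrefl 0)
  | succ n ih =>
      intro i j h
      rw [pow_succ, Matrix.mul_apply] at h
      obtain ⟨c, _, hc⟩ : ∃ c ∈ Finset.univ, 0 < (M ^ n) i c * M c j := by
        by_contra hcon
        push_neg at hcon
        exact absurd h (not_lt.2 (Finset.sum_nonpos fun c hcu => hcon c hcu))
      have h1 : 0 < (M ^ n) i c := by
        rcases lt_or_eq_of_le (aux_pow_nonneg M hM n i c) with h' | h'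
        · exact h'
        · rw [← h'] at hc; simp at hc
      have h2 : 0 < M c j := by
        rcases lt_or_eq_of_le (hM c j) with h' | h'
        · exact h'
        · rw [← h'] at hc; simp at hc
      have h3 := ih i c h1
      have h4 := hedge c j h2
      rw [pow_succ, Matrix.mul_apply]
      refine Finset.sum_pos' (fun d _ => mul_nonneg (aux_pow_nonneg N hN n _ d) (hN d _)) ?_
      exact ⟨φ c, Finset.mem_univ _, mul_pos h3 h4⟩

/-- **The collapsed chain is irreducible and its stationary distribution agrees
with the original one off the stopping set, giving mass `Z_S / Z` to the
collapsed state.** -/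
theorem stmt1 {Ω : Type*} [Fintype Ω] [DecidableEq Ω]
    (p : Ω → Ω → ℝ) (E : Ω → ℝ)
    (hstoch : ∀ x, (∀ y, 0 ≤ p x y) ∧ ∑ y, p x y = 1)
    (hirr : ∀ x y : Ω, ∃ n : ℕ, 0 < (Matrix.of p ^ n) x y)
    (S : Finset Ω) (hS1 : S.Nonempty) (hS2 : S ≠ Finset.univ)
    (Z : ℝ) (hZ : Z = ∑ y, Real.exp (-E y))
    (π : Ω → ℝ) (hπ : ∀ x, π x = Real.exp (-E x) / Z)
    (hrev : ∀ x y, π x * p x y = π y * p y x)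
    (ZS : ℝ) (hZS : ZS = ∑ y ∈ S, Real.exp (-E y))
    (p' : ({x : Ω // x ∉ S} ⊕ Unit) → ({x : Ω // x ∉ S} ⊕ Unit) → ℝ)
    (hp'1 : ∀ x : {x : Ω // x ∉ S},
      p' (Sum.inr ()) (Sum.inl x) = ∑ y ∈ S, (Real.exp (-E y) / ZS) * p y x)
    (hp'2 : ∀ x : {x : Ω // x ∉ S},
      p' (Sum.inl x) (Sum.inr ()) = ∑ y ∈ S, p (x : Ω) y)
    (hp'3 : p' (Sum.inr ()) (Sum.inr ())
      = ∑ y ∈ S, (Real.exp (-E y) / ZS) * ∑ y' ∈ S, p y y')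
    (hp'4 : ∀ x x' : {x : Ω // x ∉ S},
      p' (Sum.inl x) (Sum.inl x') = p (x : Ω) (x' : Ω)) :
    (∀ a b : ({x : Ω // x ∉ S} ⊕ Unit), ∃ n : ℕ, 0 < (Matrix.of p' ^ n) a b) ∧
    (∀ a : ({x : Ω // x ∉ S} ⊕ Unit),
      0 ≤ Sum.elim (fun x : {x : Ω // x ∉ S} => π (x : Ω)) (fun _ => ZS / Z) a) ∧
    (∑ a : ({x : Ω // x ∉ S} ⊕ Unit),
      Sum.elim (fun x : {x : Ω // x ∉ S} => π (x : Ω)) (fun _ => ZS / Z) a = 1) ∧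
    (∀ b : ({x : Ω // x ∉ S} ⊕ Unit),
      ∑ a : ({x : Ω // x ∉ S} ⊕ Unit),
        Sum.elim (fun x : {x : Ω // x ∉ S} => π (x : Ω)) (fun _ => ZS / Z) a * p' a b
        = Sum.elim (fun x : {x : Ω // x ∉ S} => π (x : Ω)) (fun _ => ZS / Z) b) := by
  have hp : ∀ x y, 0 ≤ p x y := fun x y => (hstoch x).1 y
  have hZpos : 0 < Z := by
    rw [hZ]
    exact Finset.sum_pos (fun y _ => Real.exp_pos _)
      (Finset.univ_nonempty_iff.2 ⟨hS1.choose⟩)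
  have hZSpos : 0 < ZS := by
    rw [hZS]; exact Finset.sum_pos (fun y _ => Real.exp_pos _) hS1
  -- φ : collapse map
  set φ : Ω → ({x : Ω // x ∉ S} ⊕ Unit) :=
    fun z => if h : z ∈ S then Sum.inr () else Sum.inl ⟨z, h⟩ with hφ
  -- p' nonneg
  have hp'nn : ∀ a b, 0 ≤ p' a b := by
    rintro (x | u) (y | v)
    · rw [hp'4]; exact hp _ _
    · cases v; rw [hp'2]; exact Finset.sum_nonneg fun y _ => hp _ _
    · cases u; rw [hp'1]
      exact Finset.sum_nonneg fun y _ =>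
        mul_nonneg (div_nonneg (Real.exp_pos _).le hZSpos.le) (hp _ _)
    · cases u; cases v; rw [hp'3]
      exact Finset.sum_nonneg fun y _ =>
        mul_nonneg (div_nonneg (Real.exp_pos _).le hZSpos.le)
          (Finset.sum_nonneg fun y' _ => hp _ _)
  -- edge lemma
  have hedge : ∀ c y, 0 < p c y → 0 < p' (φ c) (φ y) := by
    intro c y h
    by_cases hc : c ∈ S <;> by_cases hy : y ∈ S <;>
      simp only [hφ, dif_pos, dif_neg, hc, hy, dite_true, dite_false]
    · rw [hp'3]
      refine Finset.sum_pos' (fun z _ =>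
        mul_nonneg (div_nonneg (Real.exp_pos _).le hZSpos.le)
          (Finset.sum_nonneg fun y' _ => hp _ _)) ⟨c, hc, ?_⟩
      refine mul_pos (div_pos (Real.exp_pos _) hZSpos) ?_
      exact Finset.sum_pos' (fun y' _ => hp _ _) ⟨y, hy, h⟩
    · rw [hp'1]
      exact Finset.sum_pos' (fun z _ =>
        mul_nonneg (div_nonneg (Real.exp_pos _).le hZSpos.le) (hp _ _))
        ⟨c, hc, mul_pos (div_pos (Real.exp_pos _) hZSpos) h⟩
    · rw [hp'2]
      exact Finset.sum_pos' (fun z _ => hp _ _) ⟨y, hy, h⟩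
    · rw [hp'4]; exact h
  refine ⟨?_, ?_, ?_, ?_⟩
  · -- irreducibility
    intro a b
    obtain ⟨x, hx⟩ : ∃ x, φ x = a := by
      rcases a with x | u
      · exact ⟨x, by simp [hφ, x.2]⟩
      · cases u; exact ⟨hS1.choose, by simp [hφ, hS1.choose_spec]⟩
    obtain ⟨y, hy⟩ : ∃ y, φ y = b := by
      rcases b with y | u
      · exact ⟨y, by simp [hφ, y.2]⟩
      · cases u; exact ⟨hS1.choose, by simp [hφ, hS1.choose_spec]⟩
    obtain ⟨n, hn⟩ := hirr x y
    refine ⟨n, ?_⟩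
    have := aux_pow_pos (Matrix.of p) (Matrix.of p') hp hp'nn φ hedge n x y hn
    rwa [hx, hy] at this
  · rintro (x | u)
    · simp only [Sum.elim_inl, hπ]; positivity
    · simp only [Sum.elim_inr]; positivity
  · rw [Fintype.sum_sum_type]
    simp only [Sum.elim_inl, Sum.elim_inr]
    rw [← Finset.sum_subtype Sᶜ (fun x => Finset.mem_compl) (fun x => π x)]
    have hsplit : ∑ x ∈ Sᶜ, π x + ZS / Z = 1 := by
      have h1 : ∑ x ∈ Sᶜ, π x = (∑ x ∈ Sᶜ, Real.exp (-E x)) / Z := by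
        rw [Finset.sum_div]; exact Finset.sum_congr rfl fun x _ => hπ x
      have h2 : (∑ x ∈ Sᶜ, Real.exp (-E x)) + ZS = Z := by
        rw [hZS, hZ]; exact Finset.sum_compl_add_sum S _
      rw [h1, hZS, ← add_div, ← hZS, h2, div_self hZpos.ne']
    simpa using hsplit
  · rintro (x' | u)
    · -- stationarity at non-collapsed state
      rw [Fintype.sum_sum_type]
      simp only [Sum.elim_inl, Sum.elim_inr, Finset.univ_unique, Finset.sum_singleton]
      have hu : (default : Unit) = () := rfl
      rw [show (Sum.inr (default : Unit) : {x : Ω // x ∉ S} ⊕ Unit) = Sum.inr () from rfl]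
      rw [hp'1]
      simp only [hp'4]
      have h2 : ZS / Z * ∑ y ∈ S, Real.exp (-E y) / ZS * p y x' = ∑ y ∈ S, π y * p y x' := by
        rw [Finset.mul_sum]
        refine Finset.sum_congr rfl fun y _ => ?_
        rw [hπ]
        field_simp
      rw [h2, ← Finset.sum_subtype Sᶜ (fun x => Finset.mem_compl)
        (fun x => π x * p x (x' : Ω))]
      rw [Finset.sum_compl_add_sum S (fun y => π y * p y (x' : Ω))]
      have : ∑ y, π y * p y (x' : Ω) = ∑ y, π (x' : Ω) * p (x' : Ω) y := by
        exact Finset.sum_congr rfl fun y _ => hrev y _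
      rw [this, ← Finset.mul_sum, (hstoch (x' : Ω)).2, mul_one]
    · -- stationarity at collapsed state
      cases u
      rw [Fintype.sum_sum_type]
      simp only [Sum.elim_inl, Sum.elim_inr, Finset.univ_unique, Finset.sum_singleton]
      rw [show (Sum.inr (default : Unit) : {x : Ω // x ∉ S} ⊕ Unit) = Sum.inr () from rfl]
      rw [hp'3]
      simp only [hp'2]
      have h2 : ZS / Z * ∑ y ∈ S, Real.exp (-E y) / ZS * ∑ y' ∈ S, p y y'
          = ∑ y ∈ S, π y * ∑ y' ∈ S, p y y' := by
        rw [Finset.mul_sum]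
        refine Finset.sum_congr rfl fun y _ => ?_
        rw [hπ]
        field_simp
      rw [h2, ← Finset.sum_subtype Sᶜ (fun x => Finset.mem_compl)
        (fun x => π x * ∑ y ∈ S, p x y)]
      have h3 : ∑ x ∈ Sᶜ, π x * ∑ y ∈ S, p x y = ∑ y ∈ S, π y * ∑ x ∈ Sᶜ, p y x := by
        simp_rw [Finset.mul_sum]
        rw [Finset.sum_comm]
        exact Finset.sum_congr rfl fun y _ => Finset.sum_congr rfl fun x _ => hrev x y
      rw [h3, ← Finset.sum_add_distrib]
      have h4 : ∀ y ∈ S, π y * ∑ x ∈ Sᶜ, p y x + π y * ∑ y' ∈ S, p y y' = π y := by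
        intro y _
        rw [← mul_add]
        have : (∑ x ∈ Sᶜ, p y x) + ∑ y' ∈ S, p y y' = 1 := by
          rw [add_comm, Finset.sum_add_sum_compl S (p y)]
          exact (hstoch y).2
        rw [this, mul_one]
      rw [Finset.sum_congr rfl h4]
      rw [Finset.sum_congr rfl (fun y _ => hπ y), ← Finset.sum_div, ← hZS]
end

section
/- With the same setup, taking f ≡ 1 the estimator Ẑ = Z_S · ξ satisfies E[Ẑ] = Z; i.e., the stopping-set weight times the tour length is an unbiased estimator of the partition function of the energy model. -/
open MeasureTheory

/-- First return time to `s`. -/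
noncomputable def retTime {Ω : Type*} (s : Ω) (ω : ℕ → Ω) : ℕ :=
  sInf {t : ℕ | 1 ≤ t ∧ ω t = s}



namespace Stmt13Aux
open Finset Filter MeasureTheory
variable {Ω : Type*} [Fintype Ω] [DecidableEq Ω]

lemma matpow_nonneg (M : Matrix Ω Ω ℝ) (hM : ∀ x y, 0 ≤ M x y) :
    ∀ (n : ℕ) (x y : Ω), 0 ≤ (M ^ n) x y := by
  intro n
  induction n with
  | zero => intro x y; rw [pow_zero, Matrix.one_apply]; positivity
  | succ n ih =>
    intro x y
    rw [pow_succ, Matrix.mul_apply]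
    exact Finset.sum_nonneg fun z _ => mul_nonneg (ih x z) (hM z y)

lemma pathsum (M : Matrix Ω Ω ℝ) :
    ∀ (n : ℕ) (x y : Ω),
      ∑ g : Fin (n + 1) → Ω,
        (if g 0 = x ∧ g (Fin.last n) = y then ∏ i : Fin n, M (g i.castSucc) (g i.succ) else 0)
        = (M ^ n) x y := by
  intro n
  induction n with
  | zero =>
    intro x y
    rw [← (Equiv.funUnique (Fin 1) Ω).symm.sum_comp]
    simp only [Equiv.funUnique_symm_apply, Function.const_apply]
    rw [pow_zero, Matrix.one_apply]
    simp only [Finset.univ_eq_attach, Fin.last_zero, Finset.prod_empty]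
    by_cases h : x = y
    · subst h
      rw [Finset.sum_eq_single x]
      · simp
      · intro z _ hz; simp [hz]
      · intro hx; exact absurd (Finset.mem_univ x) hx
    · rw [if_neg h, Finset.sum_eq_zero]
      intro z _
      rw [if_neg]
      rintro ⟨rfl, rfl⟩; exact h rfl
  | succ n ih =>
    intro x y
    rw [← (Fin.consEquiv (fun _ : Fin (n + 2) => Ω)).sum_comp, Fintype.sum_prod_type]
    simp only [Fin.consEquiv_apply]
    have key : ∀ (z : Ω) (h : Fin (n + 1) → Ω),
        (if (Fin.cons z h : Fin (n+2) → Ω) 0 = x ∧ (Fin.cons z h : Fin (n+2) → Ω) (Fin.last (n+1)) = y then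
          ∏ i : Fin (n + 1), M ((Fin.cons z h : Fin (n+2) → Ω) i.castSucc) ((Fin.cons z h : Fin (n+2) → Ω) i.succ) else 0)
        = (if z = x then 1 else 0) * (M z (h 0) *
            (if h (Fin.last n) = y then ∏ i : Fin n, M (h i.castSucc) (h i.succ) else 0)) := by
      intro z h
      have h0 : (Fin.cons z h : Fin (n+2) → Ω) 0 = z := Fin.cons_zero _ _
      have hlast : (Fin.cons z h : Fin (n+2) → Ω) (Fin.last (n+1)) = h (Fin.last n) := by
        rw [← Fin.succ_last, Fin.cons_succ]
      have hprod : ∏ i : Fin (n + 1), M ((Fin.cons z h : Fin (n+2) → Ω) i.castSucc) ((Fin.cons z h : Fin (n+2) → Ω) i.succ)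
          = M z (h 0) * ∏ i : Fin n, M (h i.castSucc) (h i.succ) := by
        rw [Fin.prod_univ_succ]
        congr 1
      rw [h0, hlast, hprod]
      by_cases hz : z = x <;> by_cases hl : h (Fin.last n) = y <;> simp [hz, hl]
    have step1 : ∀ z : Ω, (∑ h : Fin (n+1) → Ω,
        (if (Fin.cons z h : Fin (n+2) → Ω) 0 = x ∧ (Fin.cons z h : Fin (n+2) → Ω) (Fin.last (n+1)) = y then
          ∏ i : Fin (n + 1), M ((Fin.cons z h : Fin (n+2) → Ω) i.castSucc) ((Fin.cons z h : Fin (n+2) → Ω) i.succ) else 0))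
        = (if z = x then 1 else 0) * ∑ h : Fin (n+1) → Ω, (M z (h 0) *
            (if h (Fin.last n) = y then ∏ i : Fin n, M (h i.castSucc) (h i.succ) else 0)) := by
      intro z
      rw [Finset.mul_sum]
      exact Finset.sum_congr rfl fun h _ => key z h
    rw [Finset.sum_congr rfl fun z _ => step1 z]
    rw [Finset.sum_eq_single x (fun z _ hz => by simp [hz]) (fun hx => absurd (Finset.mem_univ x) hx)]
    rw [if_pos rfl, one_mul]
    have step2 : ∀ h : Fin (n+1) → Ω, (M x (h 0) *
            (if h (Fin.last n) = y then ∏ i : Fin n, M (h i.castSucc) (h i.succ) else 0))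
        = ∑ w : Ω, M x w * (if h 0 = w ∧ h (Fin.last n) = y then ∏ i : Fin n, M (h i.castSucc) (h i.succ) else 0) := by
      intro h
      rw [Finset.sum_eq_single (h 0)]
      · simp
      · intro z _ hz
        rw [if_neg (fun hc => hz hc.1.symm), mul_zero]
      · intro hx; exact absurd (Finset.mem_univ _) hx
    rw [Finset.sum_congr rfl fun h _ => step2 h, Finset.sum_comm]
    have step3 : ∀ w : Ω, ∑ h : Fin (n+1) → Ω, M x w *
        (if h 0 = w ∧ h (Fin.last n) = y then ∏ i : Fin n, M (h i.castSucc) (h i.succ) else 0)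
        = M x w * (M ^ n) w y := by
      intro w
      rw [← Finset.mul_sum, ih w y]
    rw [Finset.sum_congr rfl fun w _ => step3 w, pow_succ', Matrix.mul_apply]

lemma rowpathsum (M : Matrix Ω Ω ℝ) (n : ℕ) (x : Ω) :
    ∑ g : Fin (n + 1) → Ω,
      (if g 0 = x then ∏ i : Fin n, M (g i.castSucc) (g i.succ) else 0)
      = ∑ y, (M ^ n) x y := by
  have expand : ∀ g : Fin (n+1) → Ω,
      (if g 0 = x then ∏ i : Fin n, M (g i.castSucc) (g i.succ) else 0)
      = ∑ y, (if g 0 = x ∧ g (Fin.last n) = y then ∏ i : Fin n, M (g i.castSucc) (g i.succ) else 0) := by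
    intro g
    rw [Finset.sum_eq_single (g (Fin.last n))]
    · by_cases h : g 0 = x <;> simp [h]
    · intro y _ hy
      rw [if_neg (fun hc => hy hc.2.symm)]
    · intro hy; exact absurd (Finset.mem_univ _) hy
  rw [Finset.sum_congr rfl fun g _ => expand g, Finset.sum_comm]
  exact Finset.sum_congr rfl fun y _ => pathsum M n x y

section Chain

variable (p : Ω → Ω → ℝ) (s : Ω)

noncomputable def Am : Matrix Ω Ω ℝ := Matrix.of fun x y => if y = s then 0 else p x y
noncomputable def Bm : Matrix Ω Ω ℝ := Matrix.of fun x y => if x = s then 0 else p x y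

lemma Am_apply (x y : Ω) : Am p s x y = if y = s then 0 else p x y := rfl
lemma Bm_apply (x y : Ω) : Bm p s x y = if x = s then 0 else p x y := rfl

lemma stoch_row_pow (hstoch : ∀ x, (∀ y, 0 ≤ p x y) ∧ ∑ y, p x y = 1) :
    ∀ (n : ℕ) (x : Ω), ∑ y, (Matrix.of p ^ n) x y = 1 := by
  intro n
  induction n with
  | zero => intro x; simp [pow_zero, Matrix.one_apply]
  | succ n ih =>
    intro x
    rw [pow_succ']
    simp only [Matrix.mul_apply]
    rw [Finset.sum_comm]
    have : ∀ z : Ω, ∑ y, Matrix.of p x z * (Matrix.of p ^ n) z y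
        = Matrix.of p x z := by
      intro z
      rw [← Finset.mul_sum, ih z, mul_one]
    rw [Finset.sum_congr rfl fun z _ => this z]
    exact (hstoch x).2

lemma Am_nonneg (hstoch : ∀ x, (∀ y, 0 ≤ p x y) ∧ ∑ y, p x y = 1) :
    ∀ x y, 0 ≤ Am p s x y := by
  intro x y; rw [Am_apply]; split <;> [rfl; exact (hstoch x).1 y]

lemma Am_le_p (hstoch : ∀ x, (∀ y, 0 ≤ p x y) ∧ ∑ y, p x y = 1) :
    ∀ x y, Am p s x y ≤ p x y := by
  intro x y; rw [Am_apply]; split <;> [skip; rfl]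
  next h => exact (hstoch x).1 y

lemma Am_row_split (hstoch : ∀ x, (∀ y, 0 ≤ p x y) ∧ ∑ y, p x y = 1) (x : Ω) :
    p x s + ∑ y, Am p s x y = 1 := by
  have h1 : ∀ y : Ω, Am p s x y = p x y - (if y = s then p x y else 0) := by
    intro y; rw [Am_apply]; split <;> simp
  rw [Finset.sum_congr rfl fun y _ => h1 y, Finset.sum_sub_distrib]
  rw [Finset.sum_ite_eq' Finset.univ s (fun y => p x y)]
  simp [(hstoch x).2]

noncomputable def qv (n : ℕ) (x : Ω) : ℝ := ∑ y, (Am p s ^ n) x y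

lemma qv_nonneg (hstoch : ∀ x, (∀ y, 0 ≤ p x y) ∧ ∑ y, p x y = 1) (n : ℕ) (x : Ω) :
    0 ≤ qv p s n x :=
  Finset.sum_nonneg fun y _ => matpow_nonneg _ (Am_nonneg p s hstoch) n x y

lemma qv_zero (x : Ω) : qv p s 0 x = 1 := by
  unfold qv
  simp [pow_zero, Matrix.one_apply]

lemma qv_add (m n : ℕ) (x : Ω) :
    qv p s (m + n) x = ∑ y, (Am p s ^ m) x y * qv p s n y := by
  unfold qv
  rw [pow_add]
  simp only [Matrix.mul_apply, Finset.mul_sum]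
  rw [Finset.sum_comm]

lemma qv_succ (n : ℕ) (x : Ω) :
    qv p s (n + 1) x = ∑ y, Am p s x y * qv p s n y := by
  have := qv_add p s 1 n x
  rw [show 1 + n = n + 1 by omega] at this
  rw [this]
  simp [pow_one]

lemma qv_le_one (hstoch : ∀ x, (∀ y, 0 ≤ p x y) ∧ ∑ y, p x y = 1) :
    ∀ (n : ℕ) (x : Ω), qv p s n x ≤ 1 := by
  intro n
  induction n with
  | zero => intro x; rw [qv_zero]
  | succ n ih =>
    intro x
    rw [qv_succ p s n x]
    calc ∑ y, Am p s x y * qv p s n y ≤ ∑ y, p x y * 1 := by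
          apply Finset.sum_le_sum
          intro y _
          exact mul_le_mul (Am_le_p p s hstoch x y) (ih y) (qv_nonneg p s hstoch n y)
            ((hstoch x).1 y)
      _ = 1 := by simp [(hstoch x).2]

lemma qv_antitone (hstoch : ∀ x, (∀ y, 0 ≤ p x y) ∧ ∑ y, p x y = 1) :
    ∀ (m n : ℕ) (x : Ω), m ≤ n → qv p s n x ≤ qv p s m x := by
  have step : ∀ (n : ℕ) (x : Ω), qv p s (n + 1) x ≤ qv p s n x := by
    intro n
    induction n with
    | zero => intro x; rw [qv_zero]; exact qv_le_one p s hstoch 1 x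
    | succ n ih =>
      intro x
      rw [qv_succ, qv_succ]
      apply Finset.sum_le_sum
      intro y _
      exact mul_le_mul_of_nonneg_left (ih y) (Am_nonneg p s hstoch x y)
  intro m n x h
  induction n with
  | zero => simp_all
  | succ n ihn =>
    rcases Nat.lt_or_ge m (n+1) with h' | h'
    · exact le_trans (step n x) (ihn (by omega))
    · have : m = n + 1 := by omega
      subst this; rfl

lemma hit_bound (hstoch : ∀ x, (∀ y, 0 ≤ p x y) ∧ ∑ y, p x y = 1) :
    ∀ (n : ℕ) (x : Ω), (Matrix.of p ^ (n+1)) x s + qv p s (n+1) x ≤ 1 := by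
  intro n
  induction n with
  | zero =>
    intro x
    rw [pow_one, qv_succ]
    have h2 : ∑ y, Am p s x y * qv p s 0 y = ∑ y, Am p s x y := by
      apply Finset.sum_congr rfl; intro y _; rw [qv_zero, mul_one]
    rw [h2]
    have : Matrix.of p x s = p x s := rfl
    rw [this, Am_row_split p s hstoch x]
  | succ n ih =>
    intro x
    rw [pow_succ', Matrix.mul_apply, qv_succ]
    have step1 : (∑ y, Matrix.of p x y * (Matrix.of p ^ (n+1)) y s)
          + ∑ y, Am p s x y * qv p s (n+1) y
        ≤ (∑ y, p x y * (Matrix.of p ^ (n+1)) y s) + ∑ y, p x y * qv p s (n+1) y := by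
      apply add_le_add
      · apply le_of_eq; apply Finset.sum_congr rfl; intro y _; rfl
      · apply Finset.sum_le_sum; intro y _
        exact mul_le_mul_of_nonneg_right (Am_le_p p s hstoch x y) (qv_nonneg p s hstoch _ y)
    refine le_trans step1 ?_
    have step2 : (∑ y, p x y * (Matrix.of p ^ (n+1)) y s) + ∑ y, p x y * qv p s (n+1) y
        = ∑ y, p x y * ((Matrix.of p ^ (n+1)) y s + qv p s (n+1) y) := by
      rw [← Finset.sum_add_distrib]; apply Finset.sum_congr rfl; intro y _; ring
    rw [step2]
    calc ∑ y, p x y * ((Matrix.of p ^ (n+1)) y s + qv p s (n+1) y)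
        ≤ ∑ y, p x y * 1 := by
          apply Finset.sum_le_sum
          intro y _
          exact mul_le_mul_of_nonneg_left (ih y) ((hstoch x).1 y)
      _ = 1 := by simp [(hstoch x).2]

lemma qv_tendsto (hstoch : ∀ x, (∀ y, 0 ≤ p x y) ∧ ∑ y, p x y = 1)
    (hirr : ∀ x y : Ω, ∃ n : ℕ, 0 < (Matrix.of p ^ n) x y) :
    ∀ x, Tendsto (fun T => qv p s T x) atTop (nhds 0) := by
  have hne : Nonempty Ω := ⟨s⟩
  have hpnn : ∀ n (x y : Ω), 0 ≤ (Matrix.of p ^ n) x y :=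
    fun n x y => matpow_nonneg _ (fun x y => (hstoch x).1 y) n x y
  have hreach : ∀ x : Ω, ∃ n : ℕ, 0 < (Matrix.of p ^ (n+1)) x s := by
    have haux : ∀ y : Ω, 0 < p s y → ∃ n : ℕ, 0 < (Matrix.of p ^ (n+1)) s s := by
      intro y hy
      obtain ⟨m, hm⟩ := hirr y s
      cases m with
      | zero =>
        rw [pow_zero, Matrix.one_apply] at hm
        have hys : y = s := by by_contra h; rw [if_neg h] at hm; exact lt_irrefl 0 hm
        subst hys
        exact ⟨0, by rw [pow_one]; exact hy⟩
      | succ m =>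
        refine ⟨m + 1, ?_⟩
        rw [pow_succ', Matrix.mul_apply]
        have hterm : 0 < Matrix.of p s y * (Matrix.of p ^ (m+1)) y s := mul_pos hy hm
        have hnn : ∀ z ∈ Finset.univ, 0 ≤ Matrix.of p s z * (Matrix.of p ^ (m+1)) z s :=
          fun z _ => mul_nonneg ((hstoch s).1 z) (hpnn (m+1) z s)
        calc (0:ℝ) < Matrix.of p s y * (Matrix.of p ^ (m+1)) y s := hterm
          _ ≤ ∑ z, Matrix.of p s z * (Matrix.of p ^ (m+1)) z s :=
            Finset.single_le_sum hnn (Finset.mem_univ y)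
    intro x
    by_cases hxs : x = s
    · rw [hxs]
      have hpos : ∃ y, 0 < p s y := by
        by_contra h
        push_neg at h
        have hzero : ∑ y, p s y = 0 := le_antisymm (Finset.sum_nonpos fun y _ => h y)
          (Finset.sum_nonneg fun y _ => (hstoch s).1 y)
        rw [(hstoch s).2] at hzero; norm_num at hzero
      obtain ⟨y, hy⟩ := hpos
      exact haux y hy
    · obtain ⟨m, hm⟩ := hirr x s
      cases m with
      | zero =>
        rw [pow_zero, Matrix.one_apply, if_neg hxs] at hm
        exact absurd hm (lt_irrefl 0)
      | succ m => exact ⟨m, hm⟩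
  choose f hf using hreach
  set N : ℕ := Finset.univ.sup (fun x : Ω => f x) + 1 with hN
  have hqN : ∀ x, qv p s N x < 1 := by
    intro x
    have h1 : qv p s N x ≤ qv p s (f x + 1) x :=
      qv_antitone p s hstoch _ _ x (by
        have : f x ≤ Finset.univ.sup (fun x : Ω => f x) := Finset.le_sup (Finset.mem_univ x)
        omega)
    have h2 : qv p s (f x + 1) x ≤ 1 - (Matrix.of p ^ (f x + 1)) x s := by
      have := hit_bound p s hstoch (f x) x; linarith
    have := hf x
    linarith
  set c : ℝ := Finset.univ.sup' Finset.univ_nonempty (fun x : Ω => qv p s N x) with hc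
  have hc1 : c < 1 := (Finset.sup'_lt_iff _).mpr fun x _ => hqN x
  have hc0 : 0 ≤ c := le_trans (qv_nonneg p s hstoch N s) (Finset.le_sup' _ (Finset.mem_univ s))
  have hcq : ∀ x, qv p s N x ≤ c := fun x => Finset.le_sup' _ (Finset.mem_univ x)
  have hgeom : ∀ (k : ℕ) (x : Ω), qv p s (N * k) x ≤ c ^ k := by
    intro k
    induction k with
    | zero => intro x; simp [qv_zero p s x]
    | succ k ih =>
      intro x
      have hsplit : N * (k + 1) = N + N * k := by ring
      rw [hsplit, qv_add p s N (N * k) x]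
      calc ∑ y, (Am p s ^ N) x y * qv p s (N * k) y
          ≤ ∑ y, (Am p s ^ N) x y * c ^ k := by
            apply Finset.sum_le_sum
            intro y _
            exact mul_le_mul_of_nonneg_left (ih y)
              (matpow_nonneg _ (Am_nonneg p s hstoch) N x y)
        _ = qv p s N x * c ^ k := by rw [← Finset.sum_mul]; rfl
        _ ≤ c * c ^ k := mul_le_mul_of_nonneg_right (hcq x) (pow_nonneg hc0 k)
        _ = c ^ (k + 1) := by ring
  intro x
  rw [Metric.tendsto_atTop]
  intro ε hε
  obtain ⟨k, hk⟩ := exists_pow_lt_of_lt_one hε hc1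
  refine ⟨N * k, fun T hT => ?_⟩
  rw [Real.dist_eq, sub_zero, abs_of_nonneg (qv_nonneg p s hstoch T x)]
  calc qv p s T x ≤ qv p s (N * k) x := qv_antitone p s hstoch _ _ x hT
    _ ≤ c ^ k := hgeom k x
    _ < ε := hk

lemma revpow (π : Ω → ℝ) (hrev : ∀ x y, π x * p x y = π y * p y x) :
    ∀ (t : ℕ) (x y : Ω), π x * (Am p s ^ t) x y = π y * (Bm p s ^ t) y x := by
  have h1 : ∀ x y, π x * Am p s x y = π y * Bm p s y x := by
    intro x y
    rw [Am_apply, Bm_apply]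
    by_cases h : y = s
    · simp [h]
    · rw [if_neg h, if_neg h]; exact hrev x y
  intro t
  induction t with
  | zero => intro x y; rw [pow_zero, pow_zero, Matrix.one_apply, Matrix.one_apply]
            by_cases h : x = y <;> simp [h, eq_comm]
  | succ t ih =>
    intro x y
    rw [pow_succ, Matrix.mul_apply, pow_succ', Matrix.mul_apply, Finset.mul_sum, Finset.mul_sum]
    calc ∑ z, π x * ((Am p s ^ t) x z * Am p s z y)
        = ∑ z, (π z * (Bm p s ^ t) z x) * Am p s z y := by
          apply Finset.sum_congr rfl; intro z _
          rw [← mul_assoc, ih x z]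
      _ = ∑ z, (Bm p s ^ t) z x * (π z * Am p s z y) := by
          apply Finset.sum_congr rfl; intro z _; ring
      _ = ∑ z, (Bm p s ^ t) z x * (π y * Bm p s y z) := by
          apply Finset.sum_congr rfl; intro z _; rw [h1 z y]
      _ = ∑ z, π y * (Bm p s y z * (Bm p s ^ t) z x) := by
          apply Finset.sum_congr rfl; intro z _; ring

lemma firstpassage_sum (hstoch : ∀ x, (∀ y, 0 ≤ p x y) ∧ ∑ y, p x y = 1) :
    ∀ (T : ℕ) (x : Ω),
      (∑ t ∈ Finset.range (T+1), (Bm p s ^ t) x s) + (if x = s then 0 else qv p s T x) = 1 := by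
  intro T
  induction T with
  | zero =>
    intro x
    simp only [zero_add, Finset.range_one, Finset.sum_singleton, pow_zero, Matrix.one_apply]
    by_cases h : x = s
    · rw [if_pos h, if_pos h, add_zero]
    · rw [if_neg h, if_neg h, qv_zero]; norm_num
  | succ T ih =>
    intro x
    by_cases hx : x = s
    · rw [hx, if_pos rfl, add_zero]
      rw [Finset.sum_range_succ']
      have hz : ∀ t, (Bm p s ^ (t+1)) s s = 0 := by
        intro t
        rw [pow_succ', Matrix.mul_apply]
        apply Finset.sum_eq_zero
        intro z _
        rw [Bm_apply]; simp
      rw [Finset.sum_eq_zero fun t _ => hz t]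
      simp [pow_zero, Matrix.one_apply]
    · rw [if_neg hx]
      rw [Finset.sum_range_succ']
      have hfirst : (Bm p s ^ 0) x s = 0 := by
        rw [pow_zero, Matrix.one_apply, if_neg hx]
      rw [hfirst, add_zero]
      have hstep : ∀ t, (Bm p s ^ (t+1)) x s = ∑ y, p x y * (Bm p s ^ t) y s := by
        intro t
        rw [pow_succ', Matrix.mul_apply]
        apply Finset.sum_congr rfl
        intro y _
        rw [Bm_apply, if_neg hx]
      have hqstep : qv p s (T + 1) x = ∑ y, p x y * (if y = s then 0 else qv p s T y) := by
        rw [qv_succ]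
        apply Finset.sum_congr rfl
        intro y _
        rw [Am_apply]
        by_cases hy : y = s
        · simp [hy]
        · rw [if_neg hy, if_neg hy]
      rw [Finset.sum_congr rfl fun t _ => hstep t, hqstep, Finset.sum_comm]
      have e1 : (∑ y, ∑ t ∈ Finset.range (T+1), p x y * (Bm p s ^ t) y s)
          + ∑ y, p x y * (if y = s then 0 else qv p s T y)
          = ∑ y, p x y * ((∑ t ∈ Finset.range (T+1), (Bm p s ^ t) y s) + (if y = s then 0 else qv p s T y)) := by
        rw [← Finset.sum_add_distrib]
        apply Finset.sum_congr rfl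
        intro y _
        rw [← Finset.mul_sum, ← mul_add]
      rw [e1]
      have e2 : ∑ y, p x y * ((∑ t ∈ Finset.range (T+1), (Bm p s ^ t) y s) + (if y = s then 0 else qv p s T y))
          = ∑ y, p x y := by
        apply Finset.sum_congr rfl
        intro y _
        rw [ih y, mul_one]
      rw [e2, (hstoch x).2]

/-- Kac-type series: the no-return mass series sums to `1 / π s`. -/
lemma a_hasSum (π : Ω → ℝ)
    (hstoch : ∀ x, (∀ y, 0 ≤ p x y) ∧ ∑ y, p x y = 1)
    (hirr : ∀ x y : Ω, ∃ n : ℕ, 0 < (Matrix.of p ^ n) x y)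
    (hrev : ∀ x y, π x * p x y = π y * p y x)
    (hπsum : ∑ x, π x = 1) (hπs : π s ≠ 0) :
    HasSum (fun t => ∑ x, (Am p s ^ t) s x) (1 / π s) := by
  have hrevd : ∀ (t : ℕ) (x : Ω), (Am p s ^ t) s x = π x * (Bm p s ^ t) x s / π s := by
    intro t x
    have := revpow p s π hrev t s x
    field_simp
    linarith [this]
  have hpartial : ∀ T : ℕ, ∑ t ∈ Finset.range (T+1), (∑ x, (Am p s ^ t) s x)
      = (∑ x, π x * (1 - (if x = s then 0 else qv p s T x))) / π s := by
    intro T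
    rw [Finset.sum_comm]
    rw [Finset.sum_div]
    apply Finset.sum_congr rfl
    intro x _
    rw [Finset.sum_congr rfl fun t _ => hrevd t x]
    rw [← Finset.sum_div, ← Finset.mul_sum]
    congr 2
    have := firstpassage_sum p s hstoch T x
    linarith
  have hlim : Tendsto (fun T => (∑ x, π x * (1 - (if x = s then 0 else qv p s T x))) / π s)
      atTop (nhds (1 / π s)) := by
    have hterm : ∀ x : Ω, Tendsto (fun T => π x * (1 - (if x = s then 0 else qv p s T x)))
        atTop (nhds (π x)) := by
      intro x
      by_cases hx : x = s
      · simp only [hx, if_pos rfl]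
        simpa using tendsto_const_nhds
      · simp only [if_neg hx]
        have : Tendsto (fun T => 1 - qv p s T x) atTop (nhds 1) := by
          have := (qv_tendsto p s hstoch hirr x).const_sub 1
          simpa using this
        have := this.const_mul (π x)
        simpa using this
    have hsum : Tendsto (fun T => ∑ x, π x * (1 - (if x = s then 0 else qv p s T x)))
        atTop (nhds (∑ x, π x)) := tendsto_finset_sum _ (fun x _ => hterm x)
    rw [hπsum] at hsum
    exact hsum.div_const (π s)
  have hshift : Tendsto (fun T => ∑ t ∈ Finset.range (T+1), (∑ x, (Am p s ^ t) s x))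
      atTop (nhds (1 / π s)) := by
    rw [show (fun T => ∑ t ∈ Finset.range (T+1), (∑ x, (Am p s ^ t) s x))
        = fun T => (∑ x, π x * (1 - (if x = s then 0 else qv p s T x))) / π s
      from funext hpartial]
    exact hlim
  have hnn : ∀ t : ℕ, 0 ≤ ∑ x, (Am p s ^ t) s x :=
    fun t => Finset.sum_nonneg fun x _ => matpow_nonneg _ (Am_nonneg p s hstoch) t s x
  rw [hasSum_iff_tendsto_nat_of_nonneg hnn]
  exact (tendsto_add_atTop_iff_nat
    (f := fun n => ∑ t ∈ Finset.range n, ∑ x, (Am p s ^ t) s x) 1).mp hshift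

end Chain
section Meas
variable {Ω : Type*} [Fintype Ω] [DecidableEq Ω] [MeasurableSpace Ω]

/-- event determined by the first `n+1` coordinates -/
def cylEv (n : ℕ) (G : Finset (Fin (n + 1) → Ω)) : Set (ℕ → Ω) :=
  {ω | (fun i : Fin (n + 1) => ω (i : ℕ)) ∈ G}

lemma cylEv_measure (μ : Measure (ℕ → Ω)) [IsProbabilityMeasure μ]
    (n : ℕ) (W : (Fin (n + 1) → Ω) → ℝ)
    (hWnn : ∀ g, 0 ≤ W g) (hWtot : ∑ g, W g = 1)
    (hcyl : ∀ g : Fin (n + 1) → Ω,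
      μ {ω | ∀ i : Fin (n + 1), ω (i : ℕ) = g i} = ENNReal.ofReal (W g))
    (G : Finset (Fin (n + 1) → Ω)) :
    μ (cylEv n G) = ENNReal.ofReal (∑ g ∈ G, W g) ∧
      ∃ C, MeasurableSet C ∧ C =ᵐ[μ] (cylEv n G) := by
  classical
  have hcover : ∀ H : Finset (Fin (n + 1) → Ω),
      μ (cylEv n H) ≤ ENNReal.ofReal (∑ g ∈ H, W g) := by
    intro H
    have hsub : cylEv n H ⊆ ⋃ g ∈ H, {ω : ℕ → Ω | ∀ i : Fin (n + 1), ω (i : ℕ) = g i} := by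
      intro ω hω
      exact Set.mem_biUnion hω (fun i => rfl)
    calc μ (cylEv n H) ≤ μ (⋃ g ∈ H, {ω : ℕ → Ω | ∀ i : Fin (n + 1), ω (i : ℕ) = g i}) :=
          measure_mono hsub
      _ ≤ ∑ g ∈ H, μ {ω : ℕ → Ω | ∀ i : Fin (n + 1), ω (i : ℕ) = g i} :=
          measure_biUnion_finset_le H _
      _ = ∑ g ∈ H, ENNReal.ofReal (W g) := Finset.sum_congr rfl fun g _ => hcyl g
      _ = ENNReal.ofReal (∑ g ∈ H, W g) :=
          (ENNReal.ofReal_sum_of_nonneg fun g _ => hWnn g).symm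
  have hcompl : (cylEv n G)ᶜ = cylEv n Gᶜ := by
    ext ω
    simp [cylEv]
  set α := ENNReal.ofReal (∑ g ∈ G, W g) with hαdef
  set β := ENNReal.ofReal (∑ g ∈ Gᶜ, W g) with hβdef
  have hsplit : (∑ g ∈ G, W g) + (∑ g ∈ Gᶜ, W g) = 1 := by
    rw [Finset.sum_add_sum_compl, hWtot]
  have hαβ : α + β = 1 := by
    rw [hαdef, hβdef, ← ENNReal.ofReal_add (Finset.sum_nonneg fun g _ => hWnn g)
      (Finset.sum_nonneg fun g _ => hWnn g), hsplit, ENNReal.ofReal_one]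
  have h1 : μ (cylEv n G) ≤ α := hcover G
  have h2 : μ (cylEv n G)ᶜ ≤ β := by rw [hcompl]; exact hcover Gᶜ
  have huniv : (1 : ENNReal) ≤ μ (cylEv n G) + μ (cylEv n G)ᶜ := by
    calc (1 : ENNReal) = μ Set.univ := (measure_univ).symm
      _ = μ ((cylEv n G) ∪ (cylEv n G)ᶜ) := by rw [Set.union_compl_self]
      _ ≤ μ (cylEv n G) + μ (cylEv n G)ᶜ := measure_union_le _ _
  have hβtop : β ≠ ⊤ := ENNReal.ofReal_ne_top
  have hαtop : α ≠ ⊤ := ENNReal.ofReal_ne_top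
  have hαeq : α = 1 - β := by
    rw [← hαβ]; exact (ENNReal.add_sub_cancel_right hβtop).symm
  have hβeq : β = 1 - α := by
    rw [← hαβ, add_comm]; exact (ENNReal.add_sub_cancel_right hαtop).symm
  have hge : α ≤ μ (cylEv n G) := by
    rw [hαeq]
    refine tsub_le_iff_right.mpr ?_
    exact le_trans huniv (add_le_add_right h2 _)
  have hgec : β ≤ μ (cylEv n G)ᶜ := by
    rw [hβeq]
    refine tsub_le_iff_right.mpr ?_
    calc (1 : ENNReal) ≤ μ (cylEv n G) + μ (cylEv n G)ᶜ := huniv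
      _ ≤ α + μ (cylEv n G)ᶜ := add_le_add_left h1 _
      _ = μ (cylEv n G)ᶜ + α := add_comm _ _
  have hEeq : μ (cylEv n G) = α := le_antisymm h1 hge
  have hEceq : μ (cylEv n G)ᶜ = β := le_antisymm h2 hgec
  refine ⟨hEeq, ?_⟩
  obtain ⟨T, hTsub, hTm, hTμ⟩ := exists_measurable_superset μ (cylEv n G)
  obtain ⟨T', hT'sub, hT'm, hT'μ⟩ := exists_measurable_superset μ (cylEv n G)ᶜ
  have hTT'univ : μ (T ∪ T') = 1 := by
    apply le_antisymm (le_trans (measure_mono (Set.subset_univ _)) (le_of_eq measure_univ))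
    calc (1 : ENNReal) = μ Set.univ := (measure_univ).symm
      _ ≤ μ (T ∪ T') := measure_mono (by
          rw [← Set.union_compl_self (cylEv n G)]
          exact Set.union_subset_union hTsub hT'sub)
  have hinter : μ (T ∩ T') = 0 := by
    have h := measure_union_add_inter (μ := μ) T hT'm
    rw [hTT'univ, hTμ, hT'μ, hEeq, hEceq, hαβ] at h
    exact (ENNReal.add_right_inj ENNReal.one_ne_top).mp (by rw [add_zero]; exact h)
  refine ⟨T'ᶜ, hT'm.compl, ?_⟩
  rw [← measure_symmDiff_eq_zero_iff]
  have hCsub : T'ᶜ ⊆ cylEv n G := by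
    intro ω hω
    by_contra h
    exact hω (hT'sub h)
  have hdiff : cylEv n G \ T'ᶜ ⊆ T ∩ T' := by
    intro ω hω
    exact ⟨hTsub hω.1, by simpa using hω.2⟩
  have : symmDiff T'ᶜ (cylEv n G) ⊆ T ∩ T' := by
    rw [Set.symmDiff_def]
    apply Set.union_subset
    · intro ω hω; exact absurd (hCsub hω.1) hω.2
    · exact hdiff
  exact measure_mono_null this hinter


end Meas
end Stmt13Aux

open Finset Filter in
/-- **Unbiased partition function estimation.** For an irreducible
time-reversible Markov chain with stationary distribution proportional to
`exp (-E x)`, started at the collapsed stopping state `s` of weight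
`Z_S = exp (-E s)`, the estimator `Ẑ = Z_S · ξ` (stopping-set weight times
tour length) satisfies `E[Ẑ] = Z`, the partition function. -/
theorem stmt13 {Ω : Type*} [Fintype Ω] [DecidableEq Ω] [MeasurableSpace Ω]
    (p : Ω → Ω → ℝ) (E : Ω → ℝ)
    (hstoch : ∀ x, (∀ y, 0 ≤ p x y) ∧ ∑ y, p x y = 1)
    (hirr : ∀ x y : Ω, ∃ n : ℕ, 0 < (Matrix.of p ^ n) x y)
    (Z : ℝ) (hZ : Z = ∑ y, Real.exp (-E y))
    (π : Ω → ℝ) (hπ : ∀ x, π x = Real.exp (-E x) / Z)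
    (hrev : ∀ x y, π x * p x y = π y * p y x)
    (hπstat : ∀ y, ∑ x, π x * p x y = π y)
    (s : Ω) (ZS : ℝ) (hZS : ZS = Real.exp (-E s))
    (μ : Measure (ℕ → Ω)) [IsProbabilityMeasure μ]
    (hμ : ∀ (n : ℕ) (g : Fin (n + 1) → Ω),
      (μ {ω | ∀ i : Fin (n + 1), ω (i : ℕ) = g i}).toReal =
        (if g 0 = s then 1 else 0) * ∏ i : Fin n, p (g i.castSucc) (g i.succ)) :
    ∫ ω, ZS * (retTime s ω : ℝ) ∂μ = Z := by
  classical
  -- ### positivity and the stationary mass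
  have hZpos : 0 < Z := by
    rw [hZ]
    exact Finset.sum_pos (fun y _ => Real.exp_pos _) ⟨s, Finset.mem_univ s⟩
  have hZSpos : 0 < ZS := by rw [hZS]; exact Real.exp_pos _
  have hπsum : ∑ x, π x = 1 := by
    have h1 : ∑ x, π x = (∑ x, Real.exp (-E x)) / Z := by
      rw [Finset.sum_div]; exact Finset.sum_congr rfl fun x _ => hπ x
    rw [h1, ← hZ, div_self (ne_of_gt hZpos)]
  have hπsval : π s = ZS / Z := by rw [hπ s, hZS]
  have hπsne : π s ≠ 0 := by rw [hπsval]; positivity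
  -- ### the no-return mass series `a`
  set a : ℕ → ℝ := fun t => ∑ x, (Stmt13Aux.Am p s ^ t) s x with hadef
  have haSum : HasSum a (Z / ZS) := by
    have h := Stmt13Aux.a_hasSum p s π hstoch hirr hrev hπsum hπsne
    have hv : 1 / π s = Z / ZS := by rw [hπsval, one_div_div]
    rwa [hv] at h
  have hann : ∀ t, 0 ≤ a t := fun t => Finset.sum_nonneg fun x _ =>
    Stmt13Aux.matpow_nonneg _ (Stmt13Aux.Am_nonneg p s hstoch) t s x
  have haz : Tendsto a atTop (nhds 0) := haSum.summable.tendsto_atTop_zero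
  -- ### path weights
  set W : ∀ n : ℕ, (Fin (n + 1) → Ω) → ℝ := fun n g =>
    (if g 0 = s then 1 else 0) * ∏ i : Fin n, p (g i.castSucc) (g i.succ) with hWdef
  have hWnn : ∀ n g, 0 ≤ W n g := by
    intro n g
    apply mul_nonneg
    · split <;> norm_num
    · exact Finset.prod_nonneg fun i _ => (hstoch _).1 _
  have hWite : ∀ n (g : Fin (n + 1) → Ω),
      W n g = (if g 0 = s then ∏ i : Fin n, (Matrix.of p) (g i.castSucc) (g i.succ) else 0) := by
    intro n g; rw [hWdef]; by_cases h : g 0 = s <;> simp [h]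
  have hWtot : ∀ n, ∑ g : Fin (n + 1) → Ω, W n g = 1 := by
    intro n
    rw [Finset.sum_congr rfl fun g _ => hWite n g, Stmt13Aux.rowpathsum]
    exact Stmt13Aux.stoch_row_pow p hstoch n s
  have hcylm : ∀ (n : ℕ) (g : Fin (n + 1) → Ω),
      μ {ω | ∀ i : Fin (n + 1), ω (i : ℕ) = g i} = ENNReal.ofReal (W n g) := by
    intro n g
    have hW : W n g = (if g 0 = s then 1 else 0) * ∏ i : Fin n, p (g i.castSucc) (g i.succ) := rfl
    rw [hW, ← hμ n g, ENNReal.ofReal_toReal (measure_ne_top μ _)]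
  -- ### the avoid-events and their weights
  set G : ∀ t : ℕ, Finset (Fin (t + 1) → Ω) := fun t =>
    Finset.univ.filter (fun g : Fin (t + 1) → Ω =>
      g 0 = s ∧ ∀ i : Fin (t + 1), (i : ℕ) ≠ 0 → g i ≠ s) with hGdef
  have hGsum : ∀ t, ∑ g ∈ G t, W t g = a t := by
    intro t
    rw [hGdef]
    rw [Finset.sum_filter]
    have hpt : ∀ g : Fin (t + 1) → Ω,
        (if (g 0 = s ∧ ∀ i : Fin (t + 1), (i : ℕ) ≠ 0 → g i ≠ s) then W t g else 0)
        = (if g 0 = s then ∏ i : Fin t, (Stmt13Aux.Am p s) (g i.castSucc) (g i.succ) else 0) := by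
      intro g
      by_cases h0 : g 0 = s
      · by_cases hav : ∀ i : Fin (t + 1), (i : ℕ) ≠ 0 → g i ≠ s
        · rw [if_pos ⟨h0, hav⟩, if_pos h0, hWite, if_pos h0]
          apply Finset.prod_congr rfl
          intro i _
          rw [Stmt13Aux.Am_apply, if_neg (hav i.succ (by simp [Fin.val_succ]))]
          rfl
        · rw [if_neg (fun hc => hav hc.2), if_pos h0]
          obtain ⟨i, hi⟩ := not_forall.mp hav
          obtain ⟨hi0, his⟩ : (i : ℕ) ≠ 0 ∧ g i = s := by
            rcases Classical.not_imp.mp hi with ⟨h1, h2⟩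
            exact ⟨h1, not_not.mp h2⟩
          have hlt : (i : ℕ) - 1 < t := by have := i.isLt; omega
          set j : Fin t := ⟨(i : ℕ) - 1, hlt⟩ with hj
          have hji : j.succ = i := by
            apply Fin.ext
            simp only [Fin.val_succ, hj]
            omega
          symm
          apply Finset.prod_eq_zero (Finset.mem_univ j)
          rw [hji, Stmt13Aux.Am_apply, if_pos his]
      · rw [if_neg (fun hc => h0 hc.1), if_neg h0]
    rw [Finset.sum_congr rfl fun g _ => hpt g, Stmt13Aux.rowpathsum]
  -- ### the avoid events as sets of trajectories
  set Ev : ℕ → Set (ℕ → Ω) := fun t =>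
    {ω | ω 0 = s ∧ ∀ j : ℕ, 1 ≤ j → j ≤ t → ω j ≠ s} with hEvdef
  have hEvEq : ∀ t, Ev t = Stmt13Aux.cylEv t (G t) := by
    intro t
    ext ω
    simp only [hEvdef, Stmt13Aux.cylEv, Set.mem_setOf_eq, hGdef, Finset.mem_filter,
      Finset.mem_univ, true_and, Fin.val_zero]
    constructor
    · rintro ⟨h0, hav⟩
      exact ⟨h0, fun i hi => hav (i : ℕ) (by omega) (by have := i.isLt; omega)⟩
    · rintro ⟨h0, hav⟩
      refine ⟨h0, fun j h1 h2 => ?_⟩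
      have := hav ⟨j, by omega⟩ (by simp; omega)
      simpa using this
  have hEvMeas : ∀ t, μ (Ev t) = ENNReal.ofReal (a t) := by
    intro t
    rw [hEvEq t,
      (Stmt13Aux.cylEv_measure μ t (W t) (hWnn t) (hWtot t) (hcylm t) (G t)).1, hGsum t]
  have hCex : ∀ t, ∃ C, MeasurableSet C ∧ C =ᵐ[μ] Ev t := by
    intro t
    obtain ⟨C, hCm, hCae⟩ :=
      (Stmt13Aux.cylEv_measure μ t (W t) (hWnn t) (hWtot t) (hcylm t) (G t)).2
    exact ⟨C, hCm, by rw [hEvEq t]; exact hCae⟩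
  choose C hCm hCae using hCex
  -- ### null sets
  have honull : μ {ω : ℕ → Ω | ¬ ω 0 = s} = 0 := by
    set G0 : Finset (Fin 1 → Ω) := Finset.univ.filter (fun g : Fin 1 → Ω => ¬ g 0 = s) with hG0
    have hset : {ω : ℕ → Ω | ¬ ω 0 = s} = Stmt13Aux.cylEv 0 G0 := by
      ext ω
      simp [Stmt13Aux.cylEv, hG0]
    rw [hset, (Stmt13Aux.cylEv_measure μ 0 (W 0) (hWnn 0) (hWtot 0) (hcylm 0) G0).1]
    have hzero : ∑ g ∈ G0, W 0 g = 0 := by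
      apply Finset.sum_eq_zero
      intro g hg
      rw [hG0, Finset.mem_filter] at hg
      rw [hWdef]
      simp [hg.2]
    rw [hzero, ENNReal.ofReal_zero]
  set Nev : Set (ℕ → Ω) := {ω | ω 0 = s ∧ ∀ j : ℕ, 1 ≤ j → ω j ≠ s} with hNevdef
  have hNnull : μ Nev = 0 := by
    have hsub : ∀ t, Nev ⊆ Ev t := fun t ω hω => ⟨hω.1, fun j h1 _ => hω.2 j h1⟩
    have hle : ∀ t, μ Nev ≤ ENNReal.ofReal (a t) := fun t =>
      (hEvMeas t) ▸ measure_mono (hsub t)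
    have htend : Tendsto (fun t => ENNReal.ofReal (a t)) atTop (nhds 0) := by
      have := ENNReal.tendsto_ofReal haz
      simpa using this
    exact le_zero_iff.mp (ge_of_tendsto' htend hle)
  -- ### return-time characterizations
  have hgt : ∀ (ω : ℕ → Ω) (t : ℕ), t < retTime s ω ↔
      ((∃ m : ℕ, 1 ≤ m ∧ ω m = s) ∧ ∀ j : ℕ, 1 ≤ j → j ≤ t → ω j ≠ s) := by
    intro ω t
    constructor
    · intro h
      have hne : {m : ℕ | 1 ≤ m ∧ ω m = s}.Nonempty := by
        by_contra hem
        rw [Set.not_nonempty_iff_eq_empty] at hem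
        unfold retTime at h
        rw [hem, Nat.sInf_empty] at h
        omega
      refine ⟨hne, fun j h1 h2 hjs => ?_⟩
      have hle : retTime s ω ≤ j := Nat.sInf_le ⟨h1, hjs⟩
      omega
    · rintro ⟨⟨m, hm1, hm2⟩, havoid⟩
      have hmem : retTime s ω ∈ {m : ℕ | 1 ≤ m ∧ ω m = s} := Nat.sInf_mem ⟨m, hm1, hm2⟩
      by_contra hle
      push_neg at hle
      exact havoid _ hmem.1 hle hmem.2
  have hzeroiff : ∀ ω : ℕ → Ω, retTime s ω = 0 → ∀ j : ℕ, 1 ≤ j → ω j ≠ s := by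
    intro ω h j h1 hjs
    have hmem : retTime s ω ∈ {m : ℕ | 1 ≤ m ∧ ω m = s} := Nat.sInf_mem ⟨j, h1, hjs⟩
    rw [h] at hmem
    exact absurd hmem.1 (by omega)
  -- ### symmetric differences are null
  have hsymmE : ∀ t, symmDiff {ω : ℕ → Ω | t < retTime s ω} (Ev t)
      ⊆ {ω : ℕ → Ω | ¬ ω 0 = s} ∪ Nev := by
    intro t ω hω
    rw [Set.mem_symmDiff] at hω
    rcases hω with ⟨hin, hout⟩ | ⟨hin, hout⟩
    · have h2 := (hgt ω t).mp hin
      left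
      intro h0
      exact hout ⟨h0, h2.2⟩
    · have hnotgt : ¬ ((∃ m : ℕ, 1 ≤ m ∧ ω m = s) ∧ ∀ j : ℕ, 1 ≤ j → j ≤ t → ω j ≠ s) :=
        fun hc => hout ((hgt ω t).mpr hc)
      right
      refine ⟨hin.1, fun j h1 hjs => ?_⟩
      exact hnotgt ⟨⟨j, h1, hjs⟩, hin.2⟩
  have hsymmC : ∀ t, μ (symmDiff {ω : ℕ → Ω | t < retTime s ω} (C t)) = 0 := by
    intro t
    apply measure_mono_null (symmDiff_triangle {ω : ℕ → Ω | t < retTime s ω} (Ev t) (C t))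
    apply measure_union_null
    · exact measure_mono_null (hsymmE t) (measure_union_null honull hNnull)
    · rw [measure_symmDiff_eq_zero_iff]
      exact (hCae t).symm
  have hgtMeas : ∀ t, μ {ω : ℕ → Ω | t < retTime s ω} = ENNReal.ofReal (a t) := by
    intro t
    have h1 : {ω : ℕ → Ω | t < retTime s ω} =ᵐ[μ] Ev t := by
      rw [← measure_symmDiff_eq_zero_iff]
      exact measure_mono_null (hsymmE t) (measure_union_null honull hNnull)
    rw [measure_congr h1, hEvMeas t]
  -- ### measurable modification of the return time
  set gfun : (ℕ → Ω) → ℕ := fun ω => if h : ∃ t : ℕ, ω ∉ C t then Nat.find h else 0 with hgdef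
  have hgm : Measurable gfun := by
    apply measurable_to_countable'
    intro k
    rcases Nat.eq_zero_or_pos k with hk | hk
    · subst hk
      have hfib : gfun ⁻¹' {0} = (C 0)ᶜ ∪ ⋂ t, C t := by
        ext ω
        simp only [Set.mem_preimage, Set.mem_singleton_iff, hgdef, Set.mem_union,
          Set.mem_compl_iff, Set.mem_iInter]
        constructor
        · intro h
          by_cases hex : ∃ t, ω ∉ C t
          · rw [dif_pos hex] at h
            left
            have hsp := Nat.find_spec hex
            rw [h] at hsp
            exact hsp
          · right
            push_neg at hex
            exact hex
        · intro h
          rcases h with h | h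
          · have hex : ∃ t, ω ∉ C t := ⟨0, h⟩
            rw [dif_pos hex]
            exact (Nat.find_eq_iff hex).mpr ⟨h, fun n hn => absurd hn (by omega)⟩
          · rw [dif_neg]
            push_neg
            exact h
      rw [hfib]
      exact ((hCm 0).compl).union (MeasurableSet.iInter fun t => hCm t)
    · have hfib : gfun ⁻¹' {k} = (C k)ᶜ ∩ ⋂ (j : ℕ) (_ : j < k), C j := by
        ext ω
        simp only [Set.mem_preimage, Set.mem_singleton_iff, hgdef, Set.mem_inter_iff,
          Set.mem_compl_iff, Set.mem_iInter]
        constructor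
        · intro h
          by_cases hex : ∃ t, ω ∉ C t
          · rw [dif_pos hex] at h
            have hsp := (Nat.find_eq_iff hex).mp h
            exact ⟨hsp.1, fun j hj => not_not.mp (hsp.2 j hj)⟩
          · rw [dif_neg hex] at h
            omega
        · rintro ⟨h1, h2⟩
          have hex : ∃ t, ω ∉ C t := ⟨k, h1⟩
          rw [dif_pos hex]
          exact (Nat.find_eq_iff hex).mpr ⟨h1, fun j hj => not_not_intro (h2 j hj)⟩
      rw [hfib]
      exact ((hCm k).compl).inter
        (MeasurableSet.iInter fun j => MeasurableSet.iInter fun _ => hCm j)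
  -- a.e. equality of `retTime s` and `gfun`
  have haeN : ∀ᵐ ω ∂μ, retTime s ω = gfun ω := by
    rw [ae_iff]
    apply measure_mono_null (t := ({ω : ℕ → Ω | ¬ ω 0 = s} ∪ Nev)
      ∪ ⋃ t : ℕ, symmDiff {ω : ℕ → Ω | t < retTime s ω} (C t)) ?_ ?_
    · intro ω hω
      by_contra hnot
      apply hω
      simp only [Set.mem_union, not_or, Set.mem_iUnion, not_exists] at hnot
      obtain ⟨⟨h1, h2⟩, h3⟩ := hnot
      have hiff : ∀ t : ℕ, ω ∈ C t ↔ t < retTime s ω := by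
        intro t
        have := h3 t
        rw [Set.mem_symmDiff] at this
        push_neg at this
        constructor
        · intro hc
          by_contra hlt
          exact hlt (this.2 hc)
        · intro hlt
          by_contra hc
          exact hc (this.1 hlt)
      have hk1 : 1 ≤ retTime s ω := by
        by_contra hr
        push_neg at hr
        have h0 : retTime s ω = 0 := by omega
        have hav := hzeroiff ω h0
        simp only [Set.mem_setOf_eq, not_not] at h1
        exact h2 ⟨h1, hav⟩
      have hex : ∃ t : ℕ, ω ∉ C t := by
        refine ⟨retTime s ω, fun hc => ?_⟩
        have := (hiff (retTime s ω)).mp hc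
        omega
      show retTime s ω = gfun ω
      rw [hgdef]
      simp only
      rw [dif_pos hex]
      symm
      rw [Nat.find_eq_iff hex]
      constructor
      · intro hc
        have := (hiff (retTime s ω)).mp hc
        omega
      · intro j hj
        intro hc
        exact hc ((hiff j).mpr hj)
    · exact measure_union_null (measure_union_null honull hNnull)
        (measure_iUnion_null fun t => hsymmC t)
  -- measure of the level sets of `gfun`
  have hne0 : μ {ω : ℕ → Ω | ¬ (retTime s ω = gfun ω)} = 0 := by
    have := haeN
    rwa [ae_iff] at this
  have hμg : ∀ t : ℕ, μ {ω : ℕ → Ω | t < gfun ω} = ENNReal.ofReal (a t) := by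
    intro t
    have h2 : μ (symmDiff {ω : ℕ → Ω | t < gfun ω} {ω : ℕ → Ω | t < retTime s ω}) = 0 := by
      apply measure_mono_null _ hne0
      intro ω hω
      rw [Set.mem_symmDiff] at hω
      simp only [Set.mem_setOf_eq] at hω ⊢
      rcases hω with ⟨hA, hB⟩ | ⟨hA, hB⟩ <;> omega
    rw [measure_congr (measure_symmDiff_eq_zero_iff.mp h2), hgtMeas t]
  -- ### the integral computation
  have hint1 : ∫ ω, ZS * (retTime s ω : ℝ) ∂μ = ∫ ω, ZS * (gfun ω : ℝ) ∂μ := by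
    apply integral_congr_ae
    filter_upwards [haeN] with ω h
    rw [h]
  rw [hint1, integral_const_mul]
  have hgflift : ∫ ω, (gfun ω : ℝ) ∂μ = (∫⁻ ω, ENNReal.ofReal ((gfun ω : ℕ) : ℝ) ∂μ).toReal := by
    apply integral_eq_lintegral_of_nonneg_ae
    · exact Filter.Eventually.of_forall (fun ω => by positivity)
    · exact ((measurable_from_top).comp hgm).aestronglyMeasurable
  have hmsgt : ∀ t : ℕ, MeasurableSet {ω : ℕ → Ω | t < gfun ω} :=
    fun t => hgm measurableSet_Ioi
  have hlin : ∫⁻ ω, ENNReal.ofReal ((gfun ω : ℕ) : ℝ) ∂μ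
      = ∑' t : ℕ, μ {ω : ℕ → Ω | t < gfun ω} := by
    have hpt : ∀ ω, ENNReal.ofReal ((gfun ω : ℕ) : ℝ)
        = ∑' t : ℕ, Set.indicator {ω' : ℕ → Ω | t < gfun ω'} (fun _ => (1 : ENNReal)) ω := by
      intro ω
      rw [ENNReal.ofReal_natCast]
      have hind : ∀ t : ℕ, Set.indicator {ω' : ℕ → Ω | t < gfun ω'} (fun _ => (1 : ENNReal)) ω
          = if t < gfun ω then 1 else 0 := by
        intro t
        rw [Set.indicator_apply]
        rfl
      rw [tsum_congr hind]
      rw [tsum_eq_sum (s := Finset.range (gfun ω))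
        (fun t ht => by rw [if_neg (by simpa using ht)])]
      rw [Finset.sum_congr rfl (fun t ht => if_pos (Finset.mem_range.mp ht))]
      simp
    rw [lintegral_congr hpt,
      lintegral_tsum (fun t => (measurable_const.indicator (hmsgt t)).aemeasurable)]
    apply tsum_congr
    intro t
    rw [lintegral_indicator_const (hmsgt t), one_mul]
  have htsum : ∑' t : ℕ, μ {ω : ℕ → Ω | t < gfun ω} = ENNReal.ofReal (Z / ZS) := by
    rw [tsum_congr hμg, ← ENNReal.ofReal_tsum_of_nonneg hann haSum.summable, haSum.tsum_eq]
  rw [hgflift, hlin, htsum, ENNReal.toReal_ofReal (by positivity : (0:ℝ) ≤ Z / ZS)]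
  field_simp
end
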